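/- (Grassmannian projection inequality) Suppose u·e_n > 0 and w·e_n > 0. Then P u ≠ 0, P w ≠ 0, |P u| = |P w| ≤ 1, and |u − w|² = 2 |P u|² ( 1 − (P u · P w)/(|P u| |P w|) ). Consequently the full angle is dominated by the projected angle: 1 − u·w ≤ 1 − (P u · P w)/(|P u| |P w|). -/

import Mathlib

open Filter Topology Real

/-- Grassmannian projection inequality: for unit vectors `u ≠ w` with positive last
coordinate, and `P` the orthogonal projection onto `Π = span{e_n, u - w}`, one has
`P u ≠ 0`, `P w ≠ 0`, `|P u| = |P w| ≤ 1`,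
`|u - w|² = 2|P u|²(1 - ⟪P u, P w⟫/(|P u||P w|))`, and consequently
`1 - ⟪u, w⟫ ≤ 1 - ⟪P u, P w⟫/(|P u||P w|)`. -/
theorem grassmannian_projection_inequality
    {n : ℕ}
    (u w : EuclideanSpace ℝ (Fin (n + 2)))
    (hu : ‖u‖ = 1) (hw : ‖w‖ = 1) (huw : u ≠ w)
    (hu_n : 0 < u (Fin.last (n + 1))) (hw_n : 0 < w (Fin.last (n + 1)))
    (P : EuclideanSpace ℝ (Fin (n + 2)) →ₗ[ℝ] EuclideanSpace ℝ (Fin (n + 2)))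
    (hPmem : ∀ z, P z ∈ Submodule.span ℝ
      ({EuclideanSpace.single (Fin.last (n + 1)) 1, u - w} : Set (EuclideanSpace ℝ (Fin (n + 2)))))
    (hPorth : ∀ z, z - P z ∈ (Submodule.span ℝ
      ({EuclideanSpace.single (Fin.last (n + 1)) 1, u - w} : Set (EuclideanSpace ℝ (Fin (n + 2)))))ᗮ) :
    P u ≠ 0 ∧ P w ≠ 0 ∧ ‖P u‖ = ‖P w‖ ∧ ‖P u‖ ≤ 1 ∧
    ‖u - w‖ ^ 2 = 2 * ‖P u‖ ^ 2 * (1 - (inner ℝ (P u) (P w) : ℝ) / (‖P u‖ * ‖P w‖)) ∧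
    1 - (inner ℝ u w : ℝ) ≤ 1 - (inner ℝ (P u) (P w) : ℝ) / (‖P u‖ * ‖P w‖) := by
  set e : EuclideanSpace ℝ (Fin (n + 2)) := EuclideanSpace.single (Fin.last (n + 1)) 1 with he
  set S := Submodule.span ℝ ({e, u - w} : Set (EuclideanSpace ℝ (Fin (n + 2)))) with hS
  have heS : e ∈ S := Submodule.subset_span (by simp)
  have hdS : u - w ∈ S := Submodule.subset_span (by simp)
  -- inner of e with any vector
  have hinner_e : ∀ z : EuclideanSpace ℝ (Fin (n + 2)), (inner ℝ e z : ℝ) = z (Fin.last (n + 1)) := by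
    intro z
    rw [he, EuclideanSpace.inner_single_left]
    simp
  -- Pu ≠ 0
  have hPu_inner : (inner ℝ e (P u) : ℝ) = u (Fin.last (n + 1)) := by
    have h0 : (inner ℝ e (u - P u) : ℝ) = 0 := (hPorth u) e heS
    have := hinner_e u
    rw [inner_sub_right] at h0
    rw [hinner_e (P u)] at h0 ⊢
    linarith [hinner_e u, h0]
  have hPw_inner : (inner ℝ e (P w) : ℝ) = w (Fin.last (n + 1)) := by
    have h0 : (inner ℝ e (w - P w) : ℝ) = 0 := (hPorth w) e heS
    rw [inner_sub_right] at h0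
    rw [hinner_e (P w)] at h0 ⊢
    linarith [hinner_e w, h0]
  have hPu0 : P u ≠ 0 := by
    intro h
    rw [h, inner_zero_right] at hPu_inner
    linarith
  have hPw0 : P w ≠ 0 := by
    intro h
    rw [h, inner_zero_right] at hPw_inner
    linarith
  -- P fixes u - w
  have hPd : P u - P w = u - w := by
    have h1 : (u - w) - P (u - w) ∈ S := Submodule.sub_mem S hdS (hPmem (u - w))
    have h2 : (u - w) - P (u - w) ∈ Sᗮ := hPorth (u - w)
    have h3 : (u - w) - P (u - w) = 0 := by
      have := h2 _ h1
      rwa [inner_self_eq_zero] at this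
    have h4 : P (u - w) = u - w := by
      have := sub_eq_zero.mp h3
      exact this.symm
    rw [← h4, map_sub]
  -- ⟪Pu, u⟫ = ‖Pu‖²
  have hself : ∀ z : EuclideanSpace ℝ (Fin (n + 2)), (inner ℝ (P z) z : ℝ) = ‖P z‖ ^ 2 := by
    intro z
    have h0 : (inner ℝ (P z) (z - P z) : ℝ) = 0 := (hPorth z) (P z) (hPmem z)
    rw [inner_sub_right] at h0
    rw [real_inner_self_eq_norm_sq] at h0
    linarith
  -- ‖Pu‖ = ‖Pw‖
  have hsumorth : (inner ℝ (P u + P w) (u - w) : ℝ) = (inner ℝ (u + w) (u - w) : ℝ) := by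
    have h0 : ((u + w) - (P u + P w)) ∈ Sᗮ := by
      have := Submodule.add_mem Sᗮ (hPorth u) (hPorth w)
      convert this using 1
      abel
    have := h0 _ hdS
    rw [real_inner_comm] at this
    rw [inner_sub_left] at this
    linarith
  have hnormeq : ‖P u‖ = ‖P w‖ := by
    have h1 : (inner ℝ (P u + P w) (P u - P w) : ℝ) = ‖P u‖ ^ 2 - ‖P w‖ ^ 2 := by
      rw [inner_add_left, inner_sub_right, inner_sub_right,
        real_inner_self_eq_norm_sq, real_inner_self_eq_norm_sq, real_inner_comm (P w) (P u)]
      ring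
    have h2 : (inner ℝ (u + w) (u - w) : ℝ) = 0 := by
      rw [inner_add_left, inner_sub_right, inner_sub_right,
        real_inner_self_eq_norm_sq, real_inner_self_eq_norm_sq, real_inner_comm w u, hu, hw]
      ring
    rw [hPd, hsumorth, h2] at h1
    have : ‖P u‖ ^ 2 = ‖P w‖ ^ 2 := by linarith
    have hun := norm_nonneg (P u)
    have hwn := norm_nonneg (P w)
    nlinarith
  have hPupos : 0 < ‖P u‖ := norm_pos_iff.mpr hPu0
  -- ‖Pu‖ ≤ 1
  have hle1 : ‖P u‖ ≤ 1 := by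
    have h1 : (inner ℝ (P u) u : ℝ) ≤ ‖P u‖ * ‖u‖ := real_inner_le_norm _ _
    rw [hself u, hu] at h1
    nlinarith
  -- main identity
  have hcs : (inner ℝ (P u) (P w) : ℝ) ≤ ‖P u‖ * ‖P w‖ := real_inner_le_norm _ _
  have hexp : ‖u - w‖ ^ 2 = 2 * ‖P u‖ ^ 2 - 2 * (inner ℝ (P u) (P w) : ℝ) := by
    rw [← hPd, @norm_sub_sq_real, ← hnormeq]
    ring
  have hmain : ‖u - w‖ ^ 2 = 2 * ‖P u‖ ^ 2 * (1 - (inner ℝ (P u) (P w) : ℝ) / (‖P u‖ * ‖P w‖)) := by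
    rw [hexp, ← hnormeq]
    field_simp
  refine ⟨hPu0, hPw0, hnormeq, hle1, hmain, ?_⟩
  have hex2 : ‖u - w‖ ^ 2 = 2 - 2 * (inner ℝ u w : ℝ) := by
    rw [@norm_sub_sq_real, hu, hw]; ring
  have hcos : (inner ℝ (P u) (P w) : ℝ) / (‖P u‖ * ‖P w‖) ≤ 1 := by
    rw [div_le_one (mul_pos hPupos (hnormeq ▸ hPupos))]
    exact hcs
  set c := (inner ℝ (P u) (P w) : ℝ) / (‖P u‖ * ‖P w‖) with hc
  have h1 : 1 - (inner ℝ u w : ℝ) = ‖P u‖ ^ 2 * (1 - c) := by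
    linarith [hex2, hmain]
  rw [h1]
  have hsq : ‖P u‖ ^ 2 ≤ 1 := by nlinarith
  nlinarith [mul_nonneg (sub_nonneg.mpr hsq) (sub_nonneg.mpr hcos)]
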